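/- arXiv:1009.2249 — 5 statements merged into one kernel-verified Lean document; each statement's English description precedes it below -/
import Mathlib

section
/- Let T be a contraction on a complex Hilbert space H whose defect spaces 𝒟_T and 𝒟_{T*} both have finite dimension N, and let E be a complex Hilbert space of dimension N. If U is a unitary operator on H ⊕ E whose compression to H equals T, then there exist unitary operators (surjective linear isometries) ω : E → 𝒟_{T*} and ω_* : E → 𝒟_T such that for all x ∈ H and e ∈ E, U(x ⊕ e) = (T x + D_{T*}(ω e)) ⊕ (ω_*⁻¹(D_T x) − ω_*⁻¹(T*(ω e))); here D_T x ∈ 𝒟_T, T* maps 𝒟_{T*} into 𝒟_T, and ω_*⁻¹ is the inverse (= adjoint) of ω_*. -/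
open scoped InnerProductSpace
open Filter Topology
open ContinuousLinearMap

/-- The numerical range of a bounded operator: `W(T) = {⟨Tx, x⟩ : ‖x‖ = 1}`
(written with Mathlib's inner product, which is linear in the second variable). -/
def numericalRange {H : Type*} [NormedAddCommGroup H] [InnerProductSpace ℂ H]
    (T : H →L[ℂ] H) : Set ℂ :=
  {z | ∃ x : H, ‖x‖ = 1 ∧ (inner ℂ x (T x) : ℂ) = z}

/-- The defect operator `D_T = (I - T*T)^{1/2}` of a contraction. -/
noncomputable def defectOp {H : Type*} [NormedAddCommGroup H] [InnerProductSpace ℂ H]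
    [CompleteSpace H] (T : H →L[ℂ] H) : H →L[ℂ] H :=
  CFC.sqrt (1 - ContinuousLinearMap.adjoint T * T)

/-- The defect space `𝒟_T = closure (range D_T)`. -/
noncomputable def defectSpace {H : Type*} [NormedAddCommGroup H] [InnerProductSpace ℂ H]
    [CompleteSpace H] (T : H →L[ℂ] H) : Submodule ℂ H :=
  (LinearMap.range (defectOp T : H →ₗ[ℂ] H)).topologicalClosure

/-- `U` is a unitary dilation of `T` on the orthogonal direct sum `H ⊕ E`
(realized as `WithLp 2 (H × E)`): `U` is unitary and the compression of `U` to `H` is `T`. -/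
def IsUnitaryDilation {H E : Type*} [NormedAddCommGroup H] [InnerProductSpace ℂ H]
    [CompleteSpace H] [NormedAddCommGroup E] [InnerProductSpace ℂ E] [CompleteSpace E]
    (T : H →L[ℂ] H) (U : WithLp 2 (H × E) →L[ℂ] WithLp 2 (H × E)) : Prop :=
  U ∈ unitary (WithLp 2 (H × E) →L[ℂ] WithLp 2 (H × E)) ∧
    ∀ x : H, T x = (WithLp.equiv 2 (H × E) (U ((WithLp.equiv 2 (H × E)).symm (x, 0)))).1

section Aux

variable {H : Type*} [NormedAddCommGroup H] [InnerProductSpace ℂ H] [CompleteSpace H]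

set_option synthInstance.maxHeartbeats 1000000

private lemma aeval_intertwine (a b t : H →L[ℂ] H) (hab : t * a = b * t) (p : Polynomial ℝ) :
    t * Polynomial.aeval a p = Polynomial.aeval b p * t := by
  have hpow : ∀ n : ℕ, t * a ^ n = b ^ n * t := by
    intro n; induction n with
    | zero => simp
    | succ k ih => rw [pow_succ, ← mul_assoc, ih, mul_assoc, hab, ← mul_assoc, ← pow_succ]
  induction p using Polynomial.induction_on' with
  | add p q hp hq => simp only [map_add, mul_add, add_mul, hp, hq]
  | monomial n r =>
    simp only [Polynomial.aeval_monomial]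
    rw [mul_assoc, ← hpow n, ← mul_assoc, ← mul_assoc, Algebra.commutes]

set_option maxHeartbeats 1000000 in
private lemma cfc_intertwine (a b t : H →L[ℂ] H) (ha : IsSelfAdjoint a) (hb : IsSelfAdjoint b)
    (hab : t * a = b * t) (hsa : spectrum ℝ a ⊆ Set.Icc 0 1) (hsb : spectrum ℝ b ⊆ Set.Icc 0 1)
    (f : ℝ → ℝ) (hf : ContinuousOn f (Set.Icc 0 1)) :
    t * cfc f a = cfc f b * t := by
  have key : ∀ ε : ℝ, 0 < ε → ‖t * cfc f a - cfc f b * t‖ ≤ 2 * ‖t‖ * ε := by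
    intro ε hε
    obtain ⟨p, hp⟩ := exists_polynomial_near_of_continuousOn 0 1 f hf ε hε
    have h1 : ‖cfc f a - Polynomial.aeval a p‖ ≤ ε := by
      rw [← cfc_polynomial p a ha, ← cfc_sub f p.eval a (hf.mono hsa)
        (Polynomial.continuousOn _)]
      refine norm_cfc_le hε.le fun x hx => ?_
      have := hp x (hsa hx)
      rw [Real.norm_eq_abs, abs_sub_comm]
      exact this.le
    have h2 : ‖cfc f b - Polynomial.aeval b p‖ ≤ ε := by
      rw [← cfc_polynomial p b hb, ← cfc_sub f p.eval b (hf.mono hsb)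
        (Polynomial.continuousOn _)]
      refine norm_cfc_le hε.le fun x hx => ?_
      have := hp x (hsb hx)
      rw [Real.norm_eq_abs, abs_sub_comm]
      exact this.le
    have hsplit : t * cfc f a - cfc f b * t =
        t * (cfc f a - Polynomial.aeval a p) + (Polynomial.aeval b p - cfc f b) * t := by
      rw [mul_sub, sub_mul, aeval_intertwine a b t hab p]
      abel
    calc ‖t * cfc f a - cfc f b * t‖
        ≤ ‖t * (cfc f a - Polynomial.aeval a p)‖ + ‖(Polynomial.aeval b p - cfc f b) * t‖ := by
          rw [hsplit]; exact norm_add_le _ _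
      _ ≤ ‖t‖ * ε + ε * ‖t‖ := by
          gcongr
          · calc ‖t * (cfc f a - Polynomial.aeval a p)‖
                ≤ ‖t‖ * ‖cfc f a - Polynomial.aeval a p‖ := norm_mul_le _ _
              _ ≤ ‖t‖ * ε := by gcongr
          · calc ‖(Polynomial.aeval b p - cfc f b) * t‖
                ≤ ‖Polynomial.aeval b p - cfc f b‖ * ‖t‖ := norm_mul_le _ _
              _ ≤ ε * ‖t‖ := by rw [norm_sub_rev]; gcongr
      _ = 2 * ‖t‖ * ε := by ring
  have hz : ‖t * cfc f a - cfc f b * t‖ ≤ 0 := by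
    refine le_of_forall_pos_le_add fun ε hε => ?_
    have h2 := key (ε / (2 * ‖t‖ + 1)) (by positivity)
    have hn : (0:ℝ) < 2 * ‖t‖ + 1 := by positivity
    calc ‖t * cfc f a - cfc f b * t‖ ≤ 2 * ‖t‖ * (ε / (2 * ‖t‖ + 1)) := h2
      _ ≤ ε := by
          rw [div_eq_inv_mul, ← mul_assoc]
          calc 2 * ‖t‖ * (2 * ‖t‖ + 1)⁻¹ * ε ≤ 1 * ε := by
                gcongr
                rw [mul_inv_le_iff₀ hn, one_mul]
                linarith [norm_nonneg t]
            _ = ε := one_mul ε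
      _ ≤ 0 + ε := by linarith
  rw [← sub_eq_zero]
  exact norm_le_zero_iff.mp hz


private lemma sa_one_sub (T : H →L[ℂ] H) :
    IsSelfAdjoint (1 - ContinuousLinearMap.adjoint T * T) := by
  rw [IsSelfAdjoint, star_sub, star_one, star_mul, star_eq_adjoint, star_eq_adjoint,
    adjoint_adjoint]

private lemma nonneg_one_sub (T : H →L[ℂ] H) (hT : ‖T‖ ≤ 1) :
    0 ≤ 1 - ContinuousLinearMap.adjoint T * T := by
  rw [ContinuousLinearMap.nonneg_iff_isPositive]
  refine ⟨(sa_one_sub T).isSymmetric, fun x => ?_⟩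
  have hx : ((1 - ContinuousLinearMap.adjoint T * T : H →L[ℂ] H) x)
      = x - ContinuousLinearMap.adjoint T (T x) := rfl
  rw [ContinuousLinearMap.reApplyInnerSelf_apply, hx, inner_sub_left,
    ContinuousLinearMap.adjoint_inner_left]
  rw [map_sub, inner_self_eq_norm_sq, inner_self_eq_norm_sq]
  have hTx : ‖T x‖ ≤ ‖x‖ := by
    calc ‖T x‖ ≤ ‖T‖ * ‖x‖ := T.le_opNorm x
      _ ≤ 1 * ‖x‖ := by gcongr
      _ = ‖x‖ := one_mul _
  nlinarith [norm_nonneg (T x), norm_nonneg x]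

private lemma le_one_one_sub (T : H →L[ℂ] H) :
    (1 - ContinuousLinearMap.adjoint T * T : H →L[ℂ] H) ≤ 1 := by
  have h : (0:H →L[ℂ] H) ≤ ContinuousLinearMap.adjoint T * T := by
    simpa [star_eq_adjoint] using star_mul_self_nonneg T
  calc (1 - ContinuousLinearMap.adjoint T * T : H →L[ℂ] H) ≤ 1 - 0 := by
        exact sub_le_sub_left h 1
    _ = 1 := sub_zero 1

private lemma spectrum_one_sub_subset (T : H →L[ℂ] H) (hT : ‖T‖ ≤ 1) :
    spectrum ℝ (1 - ContinuousLinearMap.adjoint T * T) ⊆ Set.Icc 0 1 := by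
  intro x hx
  refine ⟨spectrum_nonneg_of_nonneg (nonneg_one_sub T hT) hx, ?_⟩
  exact (CFC.le_one_iff (R := ℝ) _ (sa_one_sub T)).mp (le_one_one_sub T) x hx

private lemma defectOp_mul_self (T : H →L[ℂ] H) (hT : ‖T‖ ≤ 1) :
    defectOp T * defectOp T = 1 - ContinuousLinearMap.adjoint T * T :=
  CFC.sqrt_mul_sqrt_self _ (nonneg_one_sub T hT)

private lemma defectOp_nonneg (T : H →L[ℂ] H) : 0 ≤ defectOp T :=
  CFC.sqrt_nonneg _

private lemma defectOp_sa (T : H →L[ℂ] H) : IsSelfAdjoint (defectOp T) :=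
  IsSelfAdjoint.of_nonneg (defectOp_nonneg T)

private lemma defectOp_eq_cfc (T : H →L[ℂ] H) (hT : ‖T‖ ≤ 1) :
    defectOp T = cfc Real.sqrt (1 - ContinuousLinearMap.adjoint T * T) := by
  rw [defectOp, CFC.sqrt_eq_cfc, cfc_nnreal_eq_real _ _ (nonneg_one_sub T hT)]
  exact cfc_congr fun x _ => by rw [Real.sqrt]

private lemma norm_adjoint_le (T : H →L[ℂ] H) (hT : ‖T‖ ≤ 1) :
    ‖ContinuousLinearMap.adjoint T‖ ≤ 1 := by
  rw [show ‖ContinuousLinearMap.adjoint T‖ = ‖T‖ from ContinuousLinearMap.adjoint.norm_map T]; exact hT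

/-- Intertwining: `T D_T = D_{T*} T`. -/
private lemma defect_intertwine (T : H →L[ℂ] H) (hT : ‖T‖ ≤ 1) :
    T * defectOp T = defectOp (ContinuousLinearMap.adjoint T) * T := by
  have hab : T * (1 - ContinuousLinearMap.adjoint T * T)
      = (1 - ContinuousLinearMap.adjoint (ContinuousLinearMap.adjoint T)
          * ContinuousLinearMap.adjoint T) * T := by
    rw [adjoint_adjoint]; noncomm_ring
  rw [defectOp_eq_cfc T hT, defectOp_eq_cfc (ContinuousLinearMap.adjoint T) (norm_adjoint_le T hT)]
  exact cfc_intertwine _ _ T (sa_one_sub T) (sa_one_sub _) hab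
    (spectrum_one_sub_subset T hT)
    (spectrum_one_sub_subset _ (norm_adjoint_le T hT))
    Real.sqrt Real.continuous_sqrt.continuousOn

/-- Intertwining: `T* D_{T*} = D_T T*`. -/
private lemma defect_intertwine' (T : H →L[ℂ] H) (hT : ‖T‖ ≤ 1) :
    ContinuousLinearMap.adjoint T * defectOp (ContinuousLinearMap.adjoint T)
      = defectOp T * ContinuousLinearMap.adjoint T := by
  have := defect_intertwine (ContinuousLinearMap.adjoint T) (norm_adjoint_le T hT)
  rwa [adjoint_adjoint] at this

private lemma defectSpace_eq_range (T : H →L[ℂ] H) [FiniteDimensional ℂ (defectSpace T)] :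
    defectSpace T = LinearMap.range (defectOp T : H →ₗ[ℂ] H) := by
  have h1 : LinearMap.range (defectOp T : H →ₗ[ℂ] H) ≤ defectSpace T :=
    Submodule.le_topologicalClosure _
  haveI : FiniteDimensional ℂ (LinearMap.range (defectOp T : H →ₗ[ℂ] H)) :=
    Submodule.finiteDimensional_of_le h1
  refine le_antisymm ?_ h1
  exact Submodule.topologicalClosure_minimal _ le_rfl
    (Submodule.closed_of_finiteDimensional _)


variable {E : Type*} [NormedAddCommGroup E] [InnerProductSpace ℂ E] [CompleteSpace E]

/-- Factor an operator `G` with `‖G y‖ = ‖S y‖` through an isometry of `range S` onto `E`. -/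
private lemma exists_isometry_factor (S : H →L[ℂ] H) (G : H →L[ℂ] E)
    [FiniteDimensional ℂ (LinearMap.range (S : H →ₗ[ℂ] H))] [FiniteDimensional ℂ E]
    (hrank : Module.finrank ℂ (LinearMap.range (S : H →ₗ[ℂ] H)) = Module.finrank ℂ E)
    (hnorm : ∀ y, ‖G y‖ = ‖S y‖) :
    ∃ φ : E ≃ₗᵢ[ℂ] (LinearMap.range (S : H →ₗ[ℂ] H) : Submodule ℂ H),
      ∀ y : H, φ.symm ⟨S y, LinearMap.mem_range_self (S : H →ₗ[ℂ] H) y⟩ = G y := by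
  have hker : LinearMap.ker (S : H →ₗ[ℂ] H) ≤ LinearMap.ker (G : H →ₗ[ℂ] E) := by
    intro y hy
    have hy' : S y = 0 := hy
    have : ‖G y‖ = 0 := by rw [hnorm y, hy', norm_zero]
    simpa [LinearMap.mem_ker] using norm_eq_zero.mp this
  let V₀ : (H ⧸ LinearMap.ker (S : H →ₗ[ℂ] H)) →ₗ[ℂ] E :=
    Submodule.liftQ _ (G : H →ₗ[ℂ] E) hker
  let Q := LinearMap.quotKerEquivRange (S : H →ₗ[ℂ] H)
  let V₁ : (LinearMap.range (S : H →ₗ[ℂ] H)) →ₗ[ℂ] E := V₀.comp Q.symm.toLinearMap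
  have hV₁ : ∀ y : H, V₁ ⟨S y, LinearMap.mem_range_self _ y⟩ = G y := by
    intro y
    have h1 : Q ((LinearMap.ker (S : H →ₗ[ℂ] H)).mkQ y) = ⟨S y, LinearMap.mem_range_self _ y⟩ := by
      apply Subtype.ext
      simp [Q, LinearMap.quotKerEquivRange_apply_mk]
    have h2 : Q.symm ⟨S y, LinearMap.mem_range_self _ y⟩
        = (LinearMap.ker (S : H →ₗ[ℂ] H)).mkQ y := by
      rw [← h1, LinearEquiv.symm_apply_apply]
    show V₀ (Q.symm ⟨S y, LinearMap.mem_range_self _ y⟩) = G y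
    rw [h2]
    simp [V₀, Submodule.mkQ_apply]
  have hnorm₁ : ∀ z : (LinearMap.range (S : H →ₗ[ℂ] H)), ‖V₁ z‖ = ‖z‖ := by
    rintro ⟨z, hz⟩
    obtain ⟨y, rfl⟩ := hz
    have : (⟨S y, LinearMap.mem_range_self _ y⟩ :
        (LinearMap.range (S : H →ₗ[ℂ] H))) = ⟨(S : H →ₗ[ℂ] H) y, _⟩ := rfl
    rw [← this, hV₁ y, hnorm y]
    rfl
  let VI : (LinearMap.range (S : H →ₗ[ℂ] H)) →ₗᵢ[ℂ] E := ⟨V₁, hnorm₁⟩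
  have hrange_eq : LinearMap.range (S : H →ₗ[ℂ] H) = LinearMap.range (S : H →ₗ[ℂ] H) := by
    ext z; simp [LinearMap.mem_range]
  have hinj : Function.Injective VI := VI.injective
  have hsurj : Function.Surjective VI := by
    have hfr : Module.finrank ℂ (LinearMap.range (S : H →ₗ[ℂ] H)) = Module.finrank ℂ E := by
      rw [hrange_eq] at *; exact hrank
    haveI : FiniteDimensional ℂ (LinearMap.range (S : H →ₗ[ℂ] H)) := by
      rw [hrange_eq]; infer_instance
    exact (LinearMap.injective_iff_surjective_of_finrank_eq_finrank hfr).mp hinj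
  let φ₀ : (LinearMap.range (S : H →ₗ[ℂ] H)) ≃ₗᵢ[ℂ] E :=
    LinearIsometryEquiv.ofSurjective VI hsurj
  have hcast : (LinearMap.range (S : H →ₗ[ℂ] H)) = LinearMap.range (S : H →ₗ[ℂ] H) := hrange_eq
  refine ⟨φ₀.symm.trans (LinearIsometryEquiv.ofEq _ _ hcast), fun y => ?_⟩
  have hsymm : (φ₀.symm.trans (LinearIsometryEquiv.ofEq _ _ hcast)).symm
      = (LinearIsometryEquiv.ofEq _ _ hcast).symm.trans φ₀ := rfl
  rw [hsymm, LinearIsometryEquiv.trans_apply]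
  have hofeq : (LinearIsometryEquiv.ofEq _ _ hcast).symm ⟨S y, LinearMap.mem_range_self (S : H →ₗ[ℂ] H) y⟩
      = ⟨S y, LinearMap.mem_range_self (S : H →ₗ[ℂ] H) y⟩ := rfl
  rw [hofeq]
  have : φ₀ ⟨S y, LinearMap.mem_range_self (S : H →ₗ[ℂ] H) y⟩
      = VI ⟨S y, LinearMap.mem_range_self (S : H →ₗ[ℂ] H) y⟩ := by
    rw [LinearIsometryEquiv.coe_ofSurjective]
  rw [this]
  exact hV₁ y
end Aux

set_option maxHeartbeats 4000000 in
set_option synthInstance.maxHeartbeats 1000000 in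
/-- Every unitary `N`-dilation `U` of a contraction `T` with
`dim 𝒟_T = dim 𝒟_{T*} = N` to `H ⊕ E` (`dim E = N`) is of the form
`U(x ⊕ e) = (T x + D_{T*}(ω e)) ⊕ (ω_*⁻¹(D_T x) - ω_*⁻¹(T*(ω e)))`
for some unitaries `ω : E → 𝒟_{T*}` and `ω_* : E → 𝒟_T`.  (The second component is
expressed equivalently, after applying the unitary `ω_*`, as
`ω_*(second component of U(x ⊕ e)) = D_T x - T*(ω e)` in `H`.) -/
theorem unitary_dilation_structure
    {H : Type*} [NormedAddCommGroup H] [InnerProductSpace ℂ H] [CompleteSpace H]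
    {E : Type*} [NormedAddCommGroup E] [InnerProductSpace ℂ E] [CompleteSpace E]
    (N : ℕ) (T : H →L[ℂ] H) (hT : ‖T‖ ≤ 1)
    [FiniteDimensional ℂ (defectSpace T)]
    [FiniteDimensional ℂ (defectSpace (ContinuousLinearMap.adjoint T))]
    [FiniteDimensional ℂ E]
    (hdT : Module.finrank ℂ (defectSpace T) = N)
    (hdTs : Module.finrank ℂ (defectSpace (ContinuousLinearMap.adjoint T)) = N)
    (hE : Module.finrank ℂ E = N)
    (U : WithLp 2 (H × E) →L[ℂ] WithLp 2 (H × E))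
    (hU : IsUnitaryDilation T U) :
    ∃ (ω : E ≃ₗᵢ[ℂ] defectSpace (ContinuousLinearMap.adjoint T))
      (ωs : E ≃ₗᵢ[ℂ] defectSpace T),
      ∀ (x : H) (e : E),
        let v := WithLp.equiv 2 (H × E) (U ((WithLp.equiv 2 (H × E)).symm (x, e)))
        v.1 = T x + defectOp (ContinuousLinearMap.adjoint T) (ω e : H) ∧
          (ωs v.2 : H) = defectOp T x - ContinuousLinearMap.adjoint T (ω e : H) := by
  classical
  obtain ⟨hUu, hUc⟩ := hU
  have hU1 : ContinuousLinearMap.adjoint U * U = 1 := by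
    have h := (Unitary.mem_iff.mp hUu).1
    rwa [ContinuousLinearMap.star_eq_adjoint] at h
  have hU2 : U * ContinuousLinearMap.adjoint U = 1 := by
    have h := (Unitary.mem_iff.mp hUu).2
    rwa [ContinuousLinearMap.star_eq_adjoint] at h
  -- inner ℂ product preservation
  have hUinner : ∀ v w : WithLp 2 (H × E), (inner ℂ (U v) (U w) : ℂ) = inner ℂ v w := by
    intro v w
    rw [← ContinuousLinearMap.adjoint_inner_right U]
    rw [show ContinuousLinearMap.adjoint U (U w) = (ContinuousLinearMap.adjoint U * U) w from rfl,
      hU1, ContinuousLinearMap.one_apply]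
  have hUadjinner : ∀ v w : WithLp 2 (H × E),
      (inner ℂ (ContinuousLinearMap.adjoint U v) (ContinuousLinearMap.adjoint U w) : ℂ)
        = inner ℂ v w := by
    intro v w
    rw [ContinuousLinearMap.adjoint_inner_left U]
    rw [show U (ContinuousLinearMap.adjoint U w) = (U * ContinuousLinearMap.adjoint U) w from rfl,
      hU2, ContinuousLinearMap.one_apply]
  -- block maps
  let Peq : WithLp 2 (H × E) ≃L[ℂ] H × E := WithLp.prodContinuousLinearEquiv 2 ℂ H E
  let jH : H →L[ℂ] WithLp 2 (H × E) :=
    (Peq.symm : (H × E) →L[ℂ] WithLp 2 (H × E)).comp (ContinuousLinearMap.inl ℂ H E)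
  let jE : E →L[ℂ] WithLp 2 (H × E) :=
    (Peq.symm : (H × E) →L[ℂ] WithLp 2 (H × E)).comp (ContinuousLinearMap.inr ℂ H E)
  let pH : WithLp 2 (H × E) →L[ℂ] H :=
    (ContinuousLinearMap.fst ℂ H E).comp (Peq : WithLp 2 (H × E) →L[ℂ] H × E)
  let pE : WithLp 2 (H × E) →L[ℂ] E :=
    (ContinuousLinearMap.snd ℂ H E).comp (Peq : WithLp 2 (H × E) →L[ℂ] H × E)
  let B : E →L[ℂ] H := pH.comp (U.comp jE)
  let C : H →L[ℂ] E := pE.comp (U.comp jH)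
  let Dm : E →L[ℂ] E := pE.comp (U.comp jE)
  have hinner : ∀ v w : WithLp 2 (H × E),
      (inner ℂ v w : ℂ) = inner ℂ (Peq v).1 (Peq w).1 + inner ℂ (Peq v).2 (Peq w).2 := fun _ _ => rfl
  have hsum : ∀ (a : H) (b : E), jH a + jE b = Peq.symm (a, b) := by
    intro a b
    have h1 : jH a = Peq.symm (a, 0) := rfl
    have h2 : jE b = Peq.symm ((0 : H), b) := rfl
    rw [h1, h2, ← map_add]
    norm_num
  have hsymm_eq : ∀ (z : H × E), Peq.symm z = (WithLp.equiv 2 (H × E)).symm z := fun _ => rfl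
  -- decomposition of `U (jH x)`
  have hCx : ∀ x : H, U (jH x) = jH (T x) + jE (C x) := by
    intro x
    have h1 : (Peq (U (jH x))).1 = T x := (hUc x).symm
    have h2 : (Peq (U (jH x))).2 = C x := rfl
    rw [hsum]
    calc U (jH x) = Peq.symm (Peq (U (jH x))) := (Peq.symm_apply_apply _).symm
      _ = Peq.symm (T x, C x) := by rw [show Peq (U (jH x)) = ((Peq (U (jH x))).1, (Peq (U (jH x))).2) from rfl, h1, h2]
  have hBe : ∀ e : E, U (jE e) = jH (B e) + jE (Dm e) := by
    intro e
    rw [hsum]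
    calc U (jE e) = Peq.symm (Peq (U (jE e))) := (Peq.symm_apply_apply _).symm
      _ = Peq.symm (B e, Dm e) := rfl
  -- selfadjoint inner ℂ swap
  have hswap : ∀ (A : H →L[ℂ] H), IsSelfAdjoint A → ∀ u v : H, (inner ℂ (A u) v : ℂ) = inner ℂ u (A v) := by
    intro A hA u v
    nth_rewrite 1 [← hA.adjoint_eq]
    exact ContinuousLinearMap.adjoint_inner_left A v u
  -- adjoint decomposition : U† (jH y) = jH (T† y) + jE (B† y)
  have hadj : ∀ y : H, ContinuousLinearMap.adjoint U (jH y)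
      = jH (ContinuousLinearMap.adjoint T y) + jE (ContinuousLinearMap.adjoint B y) := by
    intro y
    rw [hsum]
    calc ContinuousLinearMap.adjoint U (jH y)
        = Peq.symm (Peq (ContinuousLinearMap.adjoint U (jH y))) := (Peq.symm_apply_apply _).symm
      _ = Peq.symm (ContinuousLinearMap.adjoint T y, ContinuousLinearMap.adjoint B y) := by
          congr 1
          have hfst : (Peq (ContinuousLinearMap.adjoint U (jH y))).1
              = ContinuousLinearMap.adjoint T y := by
            apply ext_inner_left ℂ
            intro x
            have e1 : (inner ℂ x (Peq (ContinuousLinearMap.adjoint U (jH y))).1 : ℂ)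
                = inner ℂ (jH x) (ContinuousLinearMap.adjoint U (jH y)) := by
              rw [hinner]
              simp [jH, Peq]
            rw [e1, ContinuousLinearMap.adjoint_inner_right, hCx x, hinner]
            simp only [hsum, Peq.apply_symm_apply]
            rw [show Peq (jH y) = (y, (0:E)) from rfl]
            simp [ContinuousLinearMap.adjoint_inner_right]
          have hsnd : (Peq (ContinuousLinearMap.adjoint U (jH y))).2
              = ContinuousLinearMap.adjoint B y := by
            apply ext_inner_left ℂ
            intro f
            have e1 : (inner ℂ f (Peq (ContinuousLinearMap.adjoint U (jH y))).2 : ℂ)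
                = inner ℂ (jE f) (ContinuousLinearMap.adjoint U (jH y)) := by
              rw [hinner]
              simp [jE, Peq]
            rw [e1, ContinuousLinearMap.adjoint_inner_right, hBe f, hinner]
            simp only [hsum, Peq.apply_symm_apply]
            rw [show Peq (jH y) = (y, (0:E)) from rfl]
            simp [ContinuousLinearMap.adjoint_inner_right]
          rw [show Peq (ContinuousLinearMap.adjoint U (jH y))
            = ((Peq (ContinuousLinearMap.adjoint U (jH y))).1,
               (Peq (ContinuousLinearMap.adjoint U (jH y))).2) from rfl, hfst, hsnd]
  -- norm identities
  have hT' : ‖ContinuousLinearMap.adjoint T‖ ≤ 1 := norm_adjoint_le T hT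
  have hDTs_sq : defectOp (ContinuousLinearMap.adjoint T) * defectOp (ContinuousLinearMap.adjoint T)
      = 1 - T * ContinuousLinearMap.adjoint T := by
    have := defectOp_mul_self (ContinuousLinearMap.adjoint T) hT'
    rwa [ContinuousLinearMap.adjoint_adjoint] at this
  have hBnorm : ∀ y : H, ‖ContinuousLinearMap.adjoint B y‖
      = ‖defectOp (ContinuousLinearMap.adjoint T) y‖ := by
    intro y
    have h1 : (inner ℂ (ContinuousLinearMap.adjoint T y) (ContinuousLinearMap.adjoint T y) : ℂ)
        + inner ℂ (ContinuousLinearMap.adjoint B y) (ContinuousLinearMap.adjoint B y)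
        = inner ℂ y y := by
      have := hUadjinner (jH y) (jH y)
      rw [hadj y, hinner, hinner] at this
      simp only [hsum, Peq.apply_symm_apply] at this
      rw [show Peq (jH y) = (y, (0:E)) from rfl] at this
      simpa using this
    have h2 : (inner ℂ (defectOp (ContinuousLinearMap.adjoint T) y)
        (defectOp (ContinuousLinearMap.adjoint T) y) : ℂ)
        = inner ℂ y y - inner ℂ (ContinuousLinearMap.adjoint T y) (ContinuousLinearMap.adjoint T y) := by
      rw [hswap _ (defectOp_sa (ContinuousLinearMap.adjoint T))]
      rw [show defectOp (ContinuousLinearMap.adjoint T) (defectOp (ContinuousLinearMap.adjoint T) y)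
        = (defectOp (ContinuousLinearMap.adjoint T) * defectOp (ContinuousLinearMap.adjoint T)) y
        from rfl, hDTs_sq]
      rw [show ((1 - T * ContinuousLinearMap.adjoint T : H →L[ℂ] H)) y
        = y - T (ContinuousLinearMap.adjoint T y) from rfl]
      rw [inner_sub_right]
      congr 1
      nth_rewrite 1 [← ContinuousLinearMap.adjoint_adjoint (A := T)]
      rw [ContinuousLinearMap.adjoint_inner_right]
    have h3 : (inner ℂ (ContinuousLinearMap.adjoint B y) (ContinuousLinearMap.adjoint B y) : ℂ)
        = inner ℂ (defectOp (ContinuousLinearMap.adjoint T) y)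
            (defectOp (ContinuousLinearMap.adjoint T) y) := by
      rw [h2]; linear_combination h1
    rw [inner_self_eq_norm_sq_to_K, inner_self_eq_norm_sq_to_K] at h3
    have h4 : ‖ContinuousLinearMap.adjoint B y‖ ^ 2
        = ‖defectOp (ContinuousLinearMap.adjoint T) y‖ ^ 2 := by exact_mod_cast h3
    have h5 := congrArg Real.sqrt h4
    rwa [Real.sqrt_sq (norm_nonneg _), Real.sqrt_sq (norm_nonneg _)] at h5
  have hCnorm : ∀ x : H, ‖C x‖ = ‖defectOp T x‖ := by
    intro x
    have h1 : (inner ℂ (T x) (T x) : ℂ) + inner ℂ (C x) (C x) = inner ℂ x x := by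
      have := hUinner (jH x) (jH x)
      rw [hCx x, hinner, hinner] at this
      simp only [hsum, Peq.apply_symm_apply] at this
      rw [show Peq (jH x) = (x, (0:E)) from rfl] at this
      simpa using this
    have h2 : (inner ℂ (defectOp T x) (defectOp T x) : ℂ) = inner ℂ x x - inner ℂ (T x) (T x) := by
      rw [hswap _ (defectOp_sa T)]
      rw [show defectOp T (defectOp T x) = (defectOp T * defectOp T) x from rfl,
        defectOp_mul_self T hT]
      rw [show ((1 - ContinuousLinearMap.adjoint T * T : H →L[ℂ] H)) x
        = x - ContinuousLinearMap.adjoint T (T x) from rfl]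
      rw [inner_sub_right, ContinuousLinearMap.adjoint_inner_right]
    have h3 : (inner ℂ (C x) (C x) : ℂ) = inner ℂ (defectOp T x) (defectOp T x) := by
      rw [h2]; linear_combination h1
    rw [inner_self_eq_norm_sq_to_K, inner_self_eq_norm_sq_to_K] at h3
    have h4 : ‖C x‖ ^ 2 = ‖defectOp T x‖ ^ 2 := by exact_mod_cast h3
    have h5 := congrArg Real.sqrt h4
    rwa [Real.sqrt_sq (norm_nonneg _), Real.sqrt_sq (norm_nonneg _)] at h5
  -- orthogonality of the two columns
  have horth : ∀ (y : H) (e : E), (inner ℂ (T y) (B e) : ℂ) + inner ℂ (C y) (Dm e) = 0 := by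
    intro y e
    have := hUinner (jH y) (jE e)
    rw [hCx y, hBe e, hinner, hinner] at this
    simp only [hsum, Peq.apply_symm_apply] at this
    rw [show Peq (jH y) = (y, (0:E)) from rfl, show Peq (jE e) = ((0:H), e) from rfl] at this
    simpa using this
  -- ranks
  have hDsp : defectSpace (ContinuousLinearMap.adjoint T)
      = LinearMap.range (defectOp (ContinuousLinearMap.adjoint T) : H →ₗ[ℂ] H) := defectSpace_eq_range _
  have hDspT : defectSpace T = LinearMap.range (defectOp T : H →ₗ[ℂ] H) := defectSpace_eq_range _
  haveI hfd1 : FiniteDimensional ℂ (LinearMap.range (defectOp (ContinuousLinearMap.adjoint T) : H →ₗ[ℂ] H)) := by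
    rw [← hDsp]; infer_instance
  haveI hfd2 : FiniteDimensional ℂ (LinearMap.range (defectOp T : H →ₗ[ℂ] H)) := by
    rw [← hDspT]; infer_instance
  have hrank1 : Module.finrank ℂ (LinearMap.range (defectOp (ContinuousLinearMap.adjoint T) : H →ₗ[ℂ] H))
      = Module.finrank ℂ E := by rw [← hDsp, hdTs, hE]
  have hrank2 : Module.finrank ℂ (LinearMap.range (defectOp T : H →ₗ[ℂ] H)) = Module.finrank ℂ E := by
    rw [← hDspT, hdT, hE]
  obtain ⟨ω0, hω0⟩ := exists_isometry_factor (defectOp (ContinuousLinearMap.adjoint T))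
    (ContinuousLinearMap.adjoint B) hrank1 hBnorm
  obtain ⟨ωs0, hωs0⟩ := exists_isometry_factor (defectOp T) C hrank2 hCnorm
  -- the key factorisation `B = D_{T*} ∘ ω`
  have hBfact : ∀ e : E, B e = defectOp (ContinuousLinearMap.adjoint T) ((ω0 e : H)) := by
    intro e
    apply ext_inner_right ℂ
    intro y
    rw [← ContinuousLinearMap.adjoint_inner_right B, ← hω0 y]
    have h1 : (inner ℂ e (ω0.symm ⟨defectOp (ContinuousLinearMap.adjoint T) y,
        LinearMap.mem_range_self _ y⟩) : ℂ)
        = inner ℂ (ω0 e) (⟨defectOp (ContinuousLinearMap.adjoint T) y,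
            LinearMap.mem_range_self _ y⟩ :
            LinearMap.range (defectOp (ContinuousLinearMap.adjoint T) : H →ₗ[ℂ] H)) := by
      rw [← ω0.inner_map_map e, LinearIsometryEquiv.apply_symm_apply]
    rw [h1, Submodule.coe_inner, hswap _ (defectOp_sa (ContinuousLinearMap.adjoint T))]
  -- membership of `T† (ω e)` in the range of `D_T`
  have hmem : ∀ e : E, ContinuousLinearMap.adjoint T ((ω0 e : H)) ∈ LinearMap.range (defectOp T : H →ₗ[ℂ] H) := by
    intro e
    obtain ⟨y, hy⟩ := (ω0 e).2
    rw [show ((ω0 e : H)) = defectOp (ContinuousLinearMap.adjoint T) y from hy.symm]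
    refine ⟨ContinuousLinearMap.adjoint T y, ?_⟩
    rw [ContinuousLinearMap.coe_coe]
    rw [show defectOp T (ContinuousLinearMap.adjoint T y)
      = (defectOp T * ContinuousLinearMap.adjoint T) y from rfl, ← defect_intertwine' T hT]
    rfl
  -- second column identity
  have hDfact : ∀ e : E, ((ωs0 (Dm e) : H))
      = - ContinuousLinearMap.adjoint T ((ω0 e : H)) := by
    intro e
    set u : H := (ωs0 (Dm e) : H) + ContinuousLinearMap.adjoint T ((ω0 e : H)) with hu_def
    have hu : u ∈ LinearMap.range (defectOp T : H →ₗ[ℂ] H) := add_mem (ωs0 (Dm e)).2 (hmem e)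
    have horthu : ∀ w : H, (inner ℂ u (defectOp T w) : ℂ) = 0 := by
      intro w
      rw [hu_def, inner_add_left]
      have ha : (inner ℂ ((ωs0 (Dm e) : H)) (defectOp T w) : ℂ) = inner ℂ (Dm e) (C w) := by
        have h1 : (inner ℂ (ωs0 (Dm e)) (⟨defectOp T w, LinearMap.mem_range_self _ w⟩ :
            LinearMap.range (defectOp T : H →ₗ[ℂ] H)) : ℂ)
            = inner ℂ (Dm e) (ωs0.symm ⟨defectOp T w, LinearMap.mem_range_self _ w⟩) := by
          rw [← ωs0.inner_map_map (Dm e), LinearIsometryEquiv.apply_symm_apply]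
        rw [Submodule.coe_inner, hωs0 w] at h1
        exact h1
      have hb : (inner ℂ (ContinuousLinearMap.adjoint T ((ω0 e : H))) (defectOp T w) : ℂ)
          = inner ℂ (B e) (T w) := by
        rw [ContinuousLinearMap.adjoint_inner_left]
        rw [show T (defectOp T w) = (T * defectOp T) w from rfl, defect_intertwine T hT]
        rw [show (defectOp (ContinuousLinearMap.adjoint T) * T) w
          = defectOp (ContinuousLinearMap.adjoint T) (T w) from rfl]
        rw [← hswap _ (defectOp_sa (ContinuousLinearMap.adjoint T)), ← hBfact e]
      rw [ha, hb]
      have := horth w e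
      have hconj := congrArg (starRingEnd ℂ) this
      rw [map_add, map_zero, inner_conj_symm, inner_conj_symm] at hconj
      linear_combination hconj
    obtain ⟨w0, hw0⟩ := hu
    have hzero : (inner ℂ u u : ℂ) = 0 := by
      nth_rewrite 2 [← hw0]
      exact horthu w0
    have hu0 : u = 0 := inner_self_eq_zero.mp hzero
    have := eq_neg_of_add_eq_zero_left (hu_def ▸ hu0)
    exact this
  -- assemble the answer
  refine ⟨ω0.trans (LinearIsometryEquiv.ofEq _ _ hDsp.symm),
    ωs0.trans (LinearIsometryEquiv.ofEq _ _ hDspT.symm), ?_⟩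
  intro x e
  have hcoe1 : ∀ e : E, (((ω0.trans (LinearIsometryEquiv.ofEq _ _ hDsp.symm)) e : H))
      = ((ω0 e : H)) := fun _ => rfl
  have hcoe2 : ∀ f : E, (((ωs0.trans (LinearIsometryEquiv.ofEq _ _ hDspT.symm)) f : H))
      = ((ωs0 f : H)) := fun _ => rfl
  have hv : U ((WithLp.equiv 2 (H × E)).symm (x, e)) = jH (T x + B e) + jE (C x + Dm e) := by
    rw [← hsymm_eq, ← hsum x e, map_add, hCx x, hBe e, map_add jH, map_add jE]
    abel
  have hv1 : (WithLp.equiv 2 (H × E) (U ((WithLp.equiv 2 (H × E)).symm (x, e)))).1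
      = T x + B e := by
    rw [hv, hsum]
    rfl
  have hv2 : (WithLp.equiv 2 (H × E) (U ((WithLp.equiv 2 (H × E)).symm (x, e)))).2
      = C x + Dm e := by
    rw [hv, hsum]
    rfl
  refine ⟨?_, ?_⟩
  · rw [hv1, hcoe1, hBfact e]
  · rw [hv2, hcoe2]
    rw [show ((ωs0 (C x + Dm e) : H)) = ((ωs0 (C x) : H)) + ((ωs0 (Dm e) : H)) by
      rw [map_add]; rfl]
    have hCpart : ((ωs0 (C x) : H)) = defectOp T x := by
      rw [← hωs0 x, LinearIsometryEquiv.apply_symm_apply]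
    rw [hCpart, hDfact e, hcoe1, sub_eq_add_neg]
end

section
/- Let 𝔎 denote the metric space of nonempty compact subsets of ℂ with the Hausdorff distance. Let A_n, A ∈ 𝔎 with A_n → A in Hausdorff distance, let X be a compact topological space, and let τ_n, τ : X → 𝔎 be continuous maps such that τ_n → τ uniformly on X. Suppose that for each n the family (τ_n(x))_{x ∈ X} wraps A_n. Then the family (τ(x))_{x ∈ X} wraps A. -/
open Filter Topology TopologicalSpace

/-- A family `(τ x)_{x ∈ X}` of subsets of `ℂ` *wraps* a set `A ⊆ ℂ` if every open
half-plane `{z : Re (c z) < r}` (`c ≠ 0`) containing `A` contains some member `τ x`. -/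
def Wraps {X : Type*} (A : Set ℂ) (τ : X → Set ℂ) : Prop :=
  ∀ (c : ℂ), c ≠ 0 → ∀ r : ℝ,
    A ⊆ {z : ℂ | (c * z).re < r} → ∃ x : X, τ x ⊆ {z : ℂ | (c * z).re < r}

/-- Let `𝔎` be the metric space of nonempty compact subsets of `ℂ` with
the Hausdorff distance.  If `Aₙ → A` in `𝔎`, `X` is a compact space, `τₙ, τ : X → 𝔎` are
continuous with `τₙ → τ` uniformly, and for each `n` the family `τₙ` wraps `Aₙ`,
then `τ` wraps `A`. -/
theorem wraps_of_tendsto_of_tendstoUniformly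
    {X : Type*} [TopologicalSpace X] [CompactSpace X]
    (A : ℕ → NonemptyCompacts ℂ) (A₀ : NonemptyCompacts ℂ)
    (hA : Tendsto A atTop (𝓝 A₀))
    (τ : ℕ → X → NonemptyCompacts ℂ) (τ₀ : X → NonemptyCompacts ℂ)
    (hτc : ∀ n, Continuous (τ n)) (hτ₀c : Continuous τ₀)
    (hunif : TendstoUniformly τ τ₀ atTop)
    (hwrap : ∀ n, Wraps (A n : Set ℂ) (fun x => (τ n x : Set ℂ))) :
    Wraps (A₀ : Set ℂ) (fun x => (τ₀ x : Set ℂ)) := by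
  intro c hc r hsub
  -- maximum of Re (c z) on A₀
  obtain ⟨z₀, hz₀, hmax'⟩ := A₀.isCompact.exists_isMaxOn A₀.nonempty
    (Continuous.continuousOn (by continuity : Continuous fun z : ℂ => (c * z).re))
  have hmax : ∀ w ∈ (A₀ : Set ℂ), (c * w).re ≤ (c * z₀).re := fun w hw => hmax' hw
  set M : ℝ := (c * z₀).re with hM
  have hMr : M < r := hsub hz₀
  set δ : ℝ := (r - M) / (2 * (‖c‖ + 1)) with hδdef
  have hcpos : (0:ℝ) < ‖c‖ + 1 := by positivity
  have hδpos : 0 < δ := by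
    apply div_pos (by linarith) (by positivity)
  have hcδ : ‖c‖ * δ < (r - M) / 2 := by
    have : ‖c‖ * δ < (‖c‖ + 1) * δ := by nlinarith
    calc ‖c‖ * δ < (‖c‖ + 1) * δ := this
      _ = (r - M) / 2 := by rw [hδdef]; field_simp
  -- eventually both distances < δ
  have h1 : ∀ᶠ n in atTop, dist (A n) A₀ < δ :=
    (Metric.tendsto_nhds.1 hA) δ hδpos
  have h2 : ∀ᶠ n in atTop, ∀ x, dist (τ₀ x) (τ n x) < δ :=
    (Metric.tendstoUniformly_iff.1 hunif) δ hδpos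
  obtain ⟨n, hn1, hn2⟩ := (h1.and h2).exists
  -- A n ⊆ smaller half-plane
  set r' : ℝ := (M + r) / 2 with hr'
  have key : ∀ (z w : ℂ), dist z w < δ → (c * w).re < r' → (c * z).re < r := by
    intro z w hd hw
    have : (c * z).re = (c * w).re + (c * (z - w)).re := by
      rw [← Complex.add_re]; ring_nf
    rw [this]
    have h3 : (c * (z - w)).re ≤ ‖c * (z - w)‖ := Complex.re_le_norm _
    have h4 : ‖c * (z - w)‖ = ‖c‖ * dist z w := by
      simp [norm_mul, Complex.dist_eq]
    have h5 : ‖c‖ * dist z w ≤ ‖c‖ * δ := by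
      apply mul_le_mul_of_nonneg_left hd.le (norm_nonneg _)
    have : (c * (z - w)).re < (r - M) / 2 := lt_of_le_of_lt (h3.trans (h4 ▸ h5))
      hcδ
    linarith
  have hAn : (A n : Set ℂ) ⊆ {z : ℂ | (c * z).re < r'} := by
    intro z hz
    have hne : EMetric.hausdorffEdist (A n : Set ℂ) (A₀ : Set ℂ) ≠ ⊤ :=
      Metric.hausdorffEdist_ne_top_of_nonempty_of_bounded (A n).nonempty A₀.nonempty
        (A n).isCompact.isBounded A₀.isCompact.isBounded
    have hd : Metric.hausdorffDist (A n : Set ℂ) (A₀ : Set ℂ) < δ := by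
      rw [← Metric.NonemptyCompacts.dist_eq]; exact hn1
    obtain ⟨w, hw, hzw⟩ := Metric.exists_dist_lt_of_hausdorffDist_lt hz hd hne
    have hwM : (c * w).re ≤ M := hmax w hw
    have heq : (c * z).re = (c * w).re + (c * (z - w)).re := by
      rw [← Complex.add_re]; ring_nf
    have h3 : (c * (z - w)).re ≤ ‖c * (z - w)‖ := Complex.re_le_norm _
    have h4 : ‖c * (z - w)‖ = ‖c‖ * dist z w := by simp [norm_mul, Complex.dist_eq]
    have h5 : ‖c‖ * dist z w ≤ ‖c‖ * δ :=
      mul_le_mul_of_nonneg_left hzw.le (norm_nonneg _)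
    have h6 : (c * (z - w)).re < (r - M) / 2 :=
      lt_of_le_of_lt (h3.trans (h4 ▸ h5)) hcδ
    show (c * z).re < r'
    rw [heq, hr']
    linarith
  obtain ⟨x, hx⟩ := hwrap n c hc r' hAn
  refine ⟨x, fun z hz => ?_⟩
  have hne : EMetric.hausdorffEdist (τ₀ x : Set ℂ) (τ n x : Set ℂ) ≠ ⊤ :=
    Metric.hausdorffEdist_ne_top_of_nonempty_of_bounded (τ₀ x).nonempty (τ n x).nonempty
      (τ₀ x).isCompact.isBounded (τ n x).isCompact.isBounded
  have hd : Metric.hausdorffDist (τ₀ x : Set ℂ) (τ n x : Set ℂ) < δ := by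
    rw [← Metric.NonemptyCompacts.dist_eq]; exact hn2 x
  obtain ⟨w, hw, hzw⟩ := Metric.exists_dist_lt_of_hausdorffDist_lt hz hd hne
  exact key z w hzw (hx hw)
end

section
/- Let H be a complex Hilbert space, let (H_n) be an increasing sequence of nonzero closed subspaces of H (H_n ⊆ H_{n+1}) whose union is dense in H, and let T be a bounded linear operator on H. For each n let T_n = P_{H_n} T|_{H_n} be the compression of T to H_n (P_{H_n} the orthogonal projection onto H_n). Then cl W(T) equals the closure of ⋃_n W(T_n); in particular, the Hausdorff distance 𝔡(cl W(T_n), cl W(T)) tends to 0 as n → ∞. -/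
open Metric Filter Topology

/-- The compression `P_K T|_K` of an operator `T` to a (complete, i.e. closed) subspace
`K`, where `P_K` is the orthogonal projection onto `K`. -/
noncomputable def compress {H : Type*} [NormedAddCommGroup H] [InnerProductSpace ℂ H]
    (K : Submodule ℂ H) [K.HasOrthogonalProjection] (T : H →L[ℂ] H) : K →L[ℂ] K :=
  K.orthogonalProjectionOnto.comp (T.comp K.subtypeL)

lemma numericalRange_compress_eq {H : Type*} [NormedAddCommGroup H] [InnerProductSpace ℂ H]
    (K : Submodule ℂ H) [K.HasOrthogonalProjection] (T : H →L[ℂ] H) :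
    numericalRange (compress K T) =
      {z | ∃ x : H, x ∈ K ∧ ‖x‖ = 1 ∧ (inner ℂ x (T x) : ℂ) = z} := by
  have key : ∀ x : K, (inner ℂ x (compress K T x) : ℂ) = inner ℂ (x : H) (T (x : H)) := by
    intro x
    show (inner ℂ x (K.orthogonalProjectionOnto (T (x : H))) : ℂ) = _
    rw [Submodule.inner_orthogonalProjectionOnto_eq_of_mem_left]
  ext z
  constructor
  · rintro ⟨x, hx, rfl⟩
    exact ⟨(x : H), x.2, by simpa using hx, (key x).symm⟩
  · rintro ⟨x, hxK, hx, rfl⟩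
    exact ⟨⟨x, hxK⟩, by simpa using hx, key ⟨x, hxK⟩⟩

lemma finite_subset_of_monotone (S : ℕ → Set ℂ) (hS : Monotone S) {F : Set ℂ}
    (hF : F.Finite) (h : F ⊆ ⋃ n, S n) : ∃ N, F ⊆ S N := by
  classical
  have hsel : ∀ w ∈ F, ∃ n, w ∈ S n := fun w hw => Set.mem_iUnion.mp (h hw)
  set f : ℂ → ℕ := fun w => if hw : ∃ n, w ∈ S n then hw.choose else 0 with hf
  refine ⟨hF.toFinset.sup f, fun w hw => ?_⟩
  have hw' : ∃ n, w ∈ S n := hsel w hw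
  have h1 : w ∈ S (f w) := by
    simp only [hf, dif_pos hw']
    exact hw'.choose_spec
  exact hS (Finset.le_sup (hF.mem_toFinset.mpr hw)) h1

/-- If `(Hₙ)` is an increasing sequence of nonzero closed subspaces of a
complex Hilbert space `H` with dense union and `Tₙ = P_{Hₙ} T|_{Hₙ}` is the compression
of a bounded operator `T` to `Hₙ`, then `closure W(T) = closure (⋃ₙ W(Tₙ))`; in
particular `𝔡(closure W(Tₙ), closure W(T)) → 0` in Hausdorff distance. -/
theorem closure_numericalRange_eq_of_dense_union
    {H : Type*} [NormedAddCommGroup H] [InnerProductSpace ℂ H] [CompleteSpace H]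
    (Hn : ℕ → Submodule ℂ H) [∀ n, CompleteSpace (Hn n)] (hne : ∀ n, Nontrivial (Hn n))
    (hmono : Monotone Hn) (hdense : Dense (⋃ n, (Hn n : Set H)))
    (T : H →L[ℂ] H) :
    closure (numericalRange T) = closure (⋃ n, numericalRange (compress (Hn n) T)) ∧
      Tendsto
        (fun n => hausdorffDist (closure (numericalRange (compress (Hn n) T)))
          (closure (numericalRange T)))
        atTop (𝓝 0) := by
  set S : ℕ → Set ℂ := fun n => {z | ∃ x : H, x ∈ Hn n ∧ ‖x‖ = 1 ∧ (inner ℂ x (T x) : ℂ) = z}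
    with hSdef
  have hS : ∀ n, numericalRange (compress (Hn n) T) = S n := fun n =>
    numericalRange_compress_eq (Hn n) T
  have hSmono : Monotone S := by
    intro a b hab z hz
    obtain ⟨x, hxa, hx1, rfl⟩ := hz
    exact ⟨x, hmono hab hxa, hx1, rfl⟩
  have hSsub : ∀ n, S n ⊆ numericalRange T := by
    rintro n z ⟨x, _, hx1, rfl⟩
    exact ⟨x, hx1, rfl⟩
  -- density step
  have hU : numericalRange T ⊆ closure (⋃ n, S n) := by
    rintro z ⟨x, hx, rfl⟩
    have hxcl : x ∈ closure (⋃ n, (Hn n : Set H)) := hdense x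
    obtain ⟨u, hu, hux⟩ := mem_closure_iff_seq_limit.mp hxcl
    set g : H → ℂ := fun y => (((‖y‖ : ℂ)) ^ 2)⁻¹ * inner ℂ y (T y) with hgdef
    have hgc : ContinuousAt g x := by
      apply ContinuousAt.mul
      · apply ContinuousAt.inv₀
        · exact ((Complex.continuous_ofReal.comp continuous_norm).pow 2).continuousAt
        · simp [hx]
      · exact ((continuous_id.inner (T.continuous)).continuousAt)
    have hgx : g x = inner ℂ x (T x) := by simp [hgdef, hx]
    have hnorm : Tendsto (fun k => ‖u k‖) atTop (𝓝 1) := by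
      have := hux.norm
      rwa [hx] at this
    have hev : ∀ᶠ k in atTop, 0 < ‖u k‖ :=
      hnorm.eventually (eventually_gt_nhds (by norm_num))
    have hmem : ∀ᶠ k in atTop, g (u k) ∈ ⋃ n, S n := by
      filter_upwards [hev] with k hk
      obtain ⟨_, ⟨m, rfl⟩, hum⟩ := hu k
      refine Set.mem_iUnion.mpr ⟨m, ?_⟩
      set c : ℂ := (‖u k‖ : ℂ) with hc
      have hc0 : c ≠ 0 := by
        simp only [hc, Ne, Complex.ofReal_eq_zero]
        exact ne_of_gt hk
      refine ⟨c⁻¹ • u k, (Hn m).smul_mem _ hum, ?_, ?_⟩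
      · rw [norm_smul]
        simp [hc, norm_inv, Complex.norm_real, abs_of_pos hk, inv_mul_cancel₀ (ne_of_gt hk)]
      · simp only [map_smul, inner_smul_left, inner_smul_right, hgdef]
        rw [map_inv₀]
        have : (starRingEnd ℂ) c = c := by simp [hc, Complex.conj_ofReal]
        rw [this]
        ring
    have htend : Tendsto (fun k => g (u k)) atTop (𝓝 (g x)) :=
      hgc.tendsto.comp hux
    rw [← hgx]
    exact mem_closure_of_tendsto htend hmem
  have hUeq : (⋃ n, numericalRange (compress (Hn n) T)) = ⋃ n, S n := by
    simp_rw [hS]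
  have heq : closure (numericalRange T) = closure (⋃ n, S n) := by
    refine Set.Subset.antisymm (closure_minimal hU isClosed_closure) ?_
    exact closure_mono (Set.iUnion_subset fun n => hSsub n)
  have part1 : closure (numericalRange T) =
      closure (⋃ n, numericalRange (compress (Hn n) T)) := by rw [hUeq, heq]
  refine ⟨part1, ?_⟩
  -- compactness
  have hbdd : ∀ z ∈ numericalRange T, ‖z‖ ≤ ‖T‖ := by
    rintro z ⟨x, hx, rfl⟩
    calc ‖(inner ℂ x (T x) : ℂ)‖ ≤ ‖x‖ * ‖T x‖ := norm_inner_le_norm x (T x)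
      _ ≤ ‖x‖ * (‖T‖ * ‖x‖) := by
          exact mul_le_mul_of_nonneg_left (T.le_opNorm x) (norm_nonneg x)
      _ = ‖T‖ := by rw [hx]; ring
  have hA : IsCompact (closure (numericalRange T)) := by
    refine Metric.isCompact_of_isClosed_isBounded isClosed_closure ?_
    exact (isBounded_iff_forall_norm_le.mpr ⟨‖T‖, hbdd⟩).closure
  rw [Metric.tendsto_atTop]
  intro ε hε
  have hcov : closure (numericalRange T) ⊆ ⋃ w ∈ (⋃ n, S n), ball w (ε / 2) := by
    intro z hz
    rw [heq] at hz
    obtain ⟨w, hw, hzw⟩ := Metric.mem_closure_iff.mp hz (ε / 2) (by linarith)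
    exact Set.mem_biUnion hw hzw
  obtain ⟨F, hFU, hFfin, hFcov⟩ :=
    hA.elim_finite_subcover_image (fun w _ => isOpen_ball) hcov
  obtain ⟨N, hN⟩ := finite_subset_of_monotone S hSmono hFfin hFU
  refine ⟨N, fun n hn => ?_⟩
  have hd : hausdorffDist (closure (numericalRange (compress (Hn n) T)))
      (closure (numericalRange T)) ≤ ε / 2 := by
    apply hausdorffDist_le_of_mem_dist (by linarith)
    · intro x hx
      refine ⟨x, ?_, by simp; linarith⟩
      rw [hS n] at hx
      exact closure_mono (hSsub n) hx
    · intro z hz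
      obtain ⟨w, hwF, hzw⟩ := Set.mem_iUnion₂.mp (hFcov hz)
      refine ⟨w, ?_, le_of_lt (by exact hzw)⟩
      rw [hS n]
      exact subset_closure (hSmono hn (hN hwF))
  have h0 : 0 ≤ hausdorffDist (closure (numericalRange (compress (Hn n) T)))
      (closure (numericalRange T)) := hausdorffDist_nonneg
  rw [Real.dist_eq, sub_zero, abs_of_nonneg h0]
  linarith
end

section
/- Let T be a bounded linear operator on a complex Hilbert space H, and let P, Q be nonzero orthogonal projections on H (bounded self-adjoint idempotents) with ‖P − Q‖ < 1. Let T_P denote the compression of T to the range of P (the operator x ↦ P(Tx) on ran P) and T_Q the compression of T to the range of Q. Then 𝔡(cl W(T_P), cl W(T_Q)) ≤ ‖T‖·‖P − Q‖·(1 + 2/(1 − ‖P − Q‖)²). -/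
open Metric

/-- The numerical range of the compression of `T` to the range of a projection `P`,
i.e. of the operator `x ↦ P (T x)` on `ran P`:
`W(T_P) = {⟨P T x, x⟩ : x ∈ ran P, ‖x‖ = 1}` (written with Mathlib's inner ℂ product,
which is linear in the second variable). -/
def compressionNumericalRange {H : Type*} [NormedAddCommGroup H] [InnerProductSpace ℂ H]
    (P T : H →L[ℂ] H) : Set ℂ :=
  {z | ∃ x : H, x ∈ LinearMap.range (P : H →ₗ[ℂ] H) ∧ ‖x‖ = 1 ∧ (inner ℂ x (P (T x)) : ℂ) = z}

open ContinuousLinearMap in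
lemma key_step_compression {H : Type*} [NormedAddCommGroup H] [InnerProductSpace ℂ H]
    [CompleteSpace H] (T P Q : H →L[ℂ] H)
    (hP : IsSelfAdjoint P) (hP2 : IsIdempotentElem P)
    (hQ : IsSelfAdjoint Q) (hQ2 : IsIdempotentElem Q)
    (hPQ : ‖P - Q‖ < 1) :
    ∀ z ∈ compressionNumericalRange P T, ∃ w ∈ compressionNumericalRange Q T,
      dist z w ≤ 3 * ‖T‖ * ‖P - Q‖ := by
  rintro z ⟨x, hxr, hx1, rfl⟩
  have hQs : ∀ u v : H, (inner ℂ (Q u) v : ℂ) = inner ℂ u (Q v) := fun u v => by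
    nth_rewrite 1 [← hQ.adjoint_eq]
    exact adjoint_inner_left Q v u
  have hPs : ∀ u v : H, (inner ℂ (P u) v : ℂ) = inner ℂ u (P v) := fun u v => by
    nth_rewrite 1 [← hP.adjoint_eq]
    exact adjoint_inner_left P v u
  have hPx : P x = x := by
    obtain ⟨u, rfl⟩ := hxr
    have := DFunLike.congr_fun hP2 u
    simpa [ContinuousLinearMap.mul_apply] using this
  have hQQ : ∀ v, Q (Q v) = Q v := fun v => by
    have := DFunLike.congr_fun hQ2 v
    simpa [ContinuousLinearMap.mul_apply] using this
  set c := ‖Q x‖ with hc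
  set δ := ‖P - Q‖ with hδ
  have hδ0 : 0 ≤ δ := norm_nonneg _
  have hinnQ : (inner ℂ x (Q x) : ℂ) = (c : ℂ)^2 := by
    calc (inner ℂ x (Q x) : ℂ) = inner ℂ x (Q (Q x)) := by rw [hQQ]
      _ = inner ℂ (Q x) (Q x) := (hQs _ _).symm
      _ = ((‖Q x‖ : ℂ))^2 := inner_self_eq_norm_sq_to_K _
      _ = (c : ℂ)^2 := by rw [hc]
  have hxQx : ‖x - Q x‖ ≤ δ := by
    have hxq : x - Q x = (P - Q) x := by simp [hPx]
    rw [hxq]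
    calc ‖(P - Q) x‖ ≤ ‖P - Q‖ * ‖x‖ := (P - Q).le_opNorm x
      _ = δ := by rw [hx1, mul_one]
  have h1c : 1 - c^2 ≤ δ := by
    have h1 : (inner ℂ x (x - Q x) : ℂ) = ((1 - c^2 : ℝ) : ℂ) := by
      rw [inner_sub_right, hinnQ, inner_self_eq_norm_sq_to_K, hx1]
      push_cast
      norm_num
    have h2 : ‖(inner ℂ x (x - Q x) : ℂ)‖ ≤ δ := by
      calc ‖(inner ℂ x (x - Q x) : ℂ)‖ ≤ ‖x‖ * ‖x - Q x‖ := norm_inner_le_norm _ _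
        _ = ‖x - Q x‖ := by rw [hx1, one_mul]
        _ ≤ δ := hxQx
    rw [h1, Complex.norm_real] at h2
    exact le_trans (le_abs_self _) h2
  have hc0 : (0:ℝ) ≤ c := norm_nonneg _
  have hc2pos : 0 < c^2 := by nlinarith
  have hcpos : 0 < c := by nlinarith
  have hc1 : c ≤ 1 := by
    have h2 : ‖(inner ℂ x (Q x) : ℂ)‖ ≤ c := by
      calc ‖(inner ℂ x (Q x) : ℂ)‖ ≤ ‖x‖ * ‖Q x‖ := norm_inner_le_norm _ _
        _ = c := by rw [hx1, one_mul]
    rw [hinnQ] at h2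
    have h3 : ‖((c:ℂ))^2‖ = c^2 := by
      rw [show ((c:ℂ))^2 = ((c^2 : ℝ) : ℂ) by push_cast; ring, Complex.norm_real,
        Real.norm_eq_abs, abs_of_nonneg (by positivity)]
    rw [h3] at h2
    nlinarith
  set y : H := ((c : ℂ))⁻¹ • Q x with hy
  have hyr : y ∈ LinearMap.range (Q : H →ₗ[ℂ] H) := ⟨((c : ℂ))⁻¹ • x, by simp [map_smul, hy]⟩
  have hy1 : ‖y‖ = 1 := by
    rw [hy, norm_smul, norm_inv, Complex.norm_real, Real.norm_eq_abs,
      abs_of_nonneg hcpos.le, inv_mul_cancel₀ hcpos.ne']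
  refine ⟨inner ℂ y (Q (T y)), ⟨y, hyr, hy1, rfl⟩, ?_⟩
  have hQy : Q y = y := by rw [hy, map_smul, hQQ]
  have hz : (inner ℂ x (P (T x)) : ℂ) = inner ℂ x (T x) := by rw [← hPs, hPx]
  have hw : (inner ℂ y (Q (T y)) : ℂ) = inner ℂ y (T y) := by rw [← hQs, hQy]
  rw [hz, hw, dist_eq_norm]
  have hyTy : (inner ℂ y (T y) : ℂ) = ((c:ℂ))⁻¹^2 * inner ℂ (Q x) (T (Q x)) := by
    rw [hy, map_smul, inner_smul_left, inner_smul_right]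
    rw [show ((((c:ℂ))⁻¹ : ℂ)) = (((c⁻¹ : ℝ)) : ℂ) by push_cast; ring, Complex.conj_ofReal]
    push_cast
    ring
  set a : ℂ := inner ℂ x (T x) with ha
  set b : ℂ := inner ℂ (Q x) (T (Q x)) with hb
  have hsplit : a - inner ℂ y (T y) = ((inner ℂ (x - Q x) (T x) : ℂ) + inner ℂ (Q x) (T x - T (Q x)))
      + (1 - ((c:ℂ))⁻¹^2) * b := by
    rw [hyTy, inner_sub_left, inner_sub_right, ha, hb]
    ring
  have hTx : ‖T x‖ ≤ ‖T‖ := by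
    calc ‖T x‖ ≤ ‖T‖ * ‖x‖ := T.le_opNorm x
      _ = ‖T‖ := by rw [hx1, mul_one]
  have e1 : ‖(inner ℂ (x - Q x) (T x) : ℂ)‖ ≤ δ * ‖T‖ := by
    calc ‖(inner ℂ (x - Q x) (T x) : ℂ)‖ ≤ ‖x - Q x‖ * ‖T x‖ := norm_inner_le_norm _ _
      _ ≤ δ * ‖T‖ := mul_le_mul hxQx hTx (norm_nonneg _) hδ0
  have e2 : ‖(inner ℂ (Q x) (T x - T (Q x)) : ℂ)‖ ≤ δ * ‖T‖ := by
    have h1 : ‖T x - T (Q x)‖ ≤ ‖T‖ * δ := by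
      calc ‖T x - T (Q x)‖ = ‖T (x - Q x)‖ := by rw [map_sub]
        _ ≤ ‖T‖ * ‖x - Q x‖ := T.le_opNorm _
        _ ≤ ‖T‖ * δ := by gcongr
    calc ‖(inner ℂ (Q x) (T x - T (Q x)) : ℂ)‖ ≤ ‖Q x‖ * ‖T x - T (Q x)‖ := norm_inner_le_norm _ _
      _ ≤ 1 * (‖T‖ * δ) := mul_le_mul hc1 h1 (norm_nonneg _) zero_le_one
      _ = δ * ‖T‖ := by ring
  have hcinv : c * c⁻¹ = 1 := mul_inv_cancel₀ hcpos.ne'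
  have hinv1 : (1:ℝ) ≤ c⁻¹^2 := by nlinarith [sq_nonneg (c⁻¹ - 1)]
  have e3 : ‖(1 - ((c:ℂ))⁻¹^2) * b‖ ≤ δ * ‖T‖ := by
    have hb1 : ‖b‖ ≤ c^2 * ‖T‖ := by
      calc ‖b‖ ≤ ‖Q x‖ * ‖T (Q x)‖ := norm_inner_le_norm _ _
        _ ≤ c * (‖T‖ * c) := by gcongr; exact T.le_opNorm _
        _ = c^2 * ‖T‖ := by ring
    have hcoef : ‖(1 - ((c:ℂ))⁻¹^2)‖ = c⁻¹^2 - 1 := by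
      rw [show (1 : ℂ) - ((c:ℂ))⁻¹^2 = ((1 - c⁻¹^2 : ℝ) : ℂ) by push_cast; ring,
        Complex.norm_real, Real.norm_eq_abs, abs_of_nonpos (by linarith), neg_sub]
    rw [norm_mul, hcoef]
    calc (c⁻¹^2 - 1) * ‖b‖ ≤ (c⁻¹^2 - 1) * (c^2 * ‖T‖) := by
          apply mul_le_mul_of_nonneg_left hb1 (by linarith)
      _ = (c⁻¹^2 * c^2) * ‖T‖ - c^2 * ‖T‖ := by ring
      _ = (1 - c^2) * ‖T‖ := by
          rw [show c⁻¹^2 * c^2 = 1 by rw [← mul_pow, inv_mul_cancel₀ hcpos.ne']; norm_num]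
          ring
      _ ≤ δ * ‖T‖ := mul_le_mul_of_nonneg_right h1c (norm_nonneg _)
  calc ‖a - inner ℂ y (T y)‖
      ≤ ‖(inner ℂ (x - Q x) (T x) : ℂ) + inner ℂ (Q x) (T x - T (Q x))‖
        + ‖(1 - ((c:ℂ))⁻¹^2) * b‖ := by rw [hsplit]; exact norm_add_le _ _
    _ ≤ (‖(inner ℂ (x - Q x) (T x) : ℂ)‖ + ‖(inner ℂ (Q x) (T x - T (Q x)) : ℂ)‖)
        + ‖(1 - ((c:ℂ))⁻¹^2) * b‖ := by gcongr; exact norm_add_le _ _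
    _ ≤ (δ * ‖T‖ + δ * ‖T‖) + δ * ‖T‖ := by gcongr
    _ = 3 * ‖T‖ * δ := by ring

lemma compression_numericalRange_nonempty {H : Type*} [NormedAddCommGroup H]
    [InnerProductSpace ℂ H] (P T : H →L[ℂ] H) (hPne : P ≠ 0) :
    (compressionNumericalRange P T).Nonempty := by
  obtain ⟨u, hu⟩ : ∃ u, P u ≠ 0 := by
    by_contra h
    push_neg at h
    exact hPne (ContinuousLinearMap.ext fun u => by simp [h u])
  have h0 : ‖P u‖ ≠ 0 := norm_ne_zero_iff.2 hu
  refine ⟨_, ((‖P u‖ : ℂ))⁻¹ • P u, ⟨((‖P u‖ : ℂ))⁻¹ • u, by simp [map_smul]⟩, ?_, rfl⟩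
  rw [norm_smul, norm_inv, Complex.norm_real, Real.norm_eq_abs,
    abs_of_nonneg (norm_nonneg _), inv_mul_cancel₀ h0]

/-- If `P, Q` are nonzero orthogonal projections (self-adjoint
idempotents) on a complex Hilbert space with `‖P - Q‖ < 1`, and `T_P`, `T_Q` denote the
compressions of a bounded operator `T` to the ranges of `P` and `Q`, then
`𝔡(closure W(T_P), closure W(T_Q)) ≤ ‖T‖ ‖P - Q‖ (1 + 2/(1 - ‖P - Q‖)²)`. -/
theorem hausdorffDist_compression_numericalRange_le
    {H : Type*} [NormedAddCommGroup H] [InnerProductSpace ℂ H] [CompleteSpace H]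
    (T P Q : H →L[ℂ] H)
    (hP : IsSelfAdjoint P) (hP2 : IsIdempotentElem P) (hPne : P ≠ 0)
    (hQ : IsSelfAdjoint Q) (hQ2 : IsIdempotentElem Q) (hQne : Q ≠ 0)
    (hPQ : ‖P - Q‖ < 1) :
    hausdorffDist (closure (compressionNumericalRange P T))
        (closure (compressionNumericalRange Q T)) ≤
      ‖T‖ * ‖P - Q‖ * (1 + 2 / (1 - ‖P - Q‖) ^ 2) := by
  set δ := ‖P - Q‖ with hδ
  have hδ0 : 0 ≤ δ := norm_nonneg _
  have h1δ : 0 < 1 - δ := by linarith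
  have hkey : 3 * ‖T‖ * δ ≤ ‖T‖ * δ * (1 + 2 / (1 - δ) ^ 2) := by
    have h1 : (1 - δ)^2 ≤ 1 := by nlinarith
    have h2 : (2:ℝ) ≤ 2 / (1 - δ)^2 := by
      rw [le_div_iff₀ (by positivity)]
      nlinarith
    have hTδ : 0 ≤ ‖T‖ * δ := by positivity
    nlinarith
  have hr0 : 0 ≤ ‖T‖ * δ * (1 + 2 / (1 - δ) ^ 2) := by positivity
  rw [Metric.hausdorffDist_closure]
  apply Metric.hausdorffDist_le_of_mem_dist hr0
  · intro z hz
    obtain ⟨w, hw, hd⟩ := key_step_compression T P Q hP hP2 hQ hQ2 hPQ z hz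
    exact ⟨w, hw, le_trans hd hkey⟩
  · intro z hz
    have hnorm : ‖Q - P‖ = δ := norm_sub_rev Q P
    have hQP : ‖Q - P‖ < 1 := by rw [hnorm]; exact hPQ
    obtain ⟨w, hw, hd⟩ := key_step_compression T Q P hQ hQ2 hP hP2 hQP z hz
    refine ⟨w, hw, ?_⟩
    calc dist z w ≤ 3 * ‖T‖ * ‖Q - P‖ := hd
      _ = 3 * ‖T‖ * δ := by rw [hnorm]
      _ ≤ _ := hkey
end

section
/- Let T be a contraction on a complex Hilbert space H and let U be a unitary operator on H ⊕ E (E a complex Hilbert space) whose compression to H equals T. Then the map D_T x ↦ P_E(U(x ⊕ 0)) extends to a linear isometry from the defect space 𝒟_T into E, and similarly there is a linear isometry from 𝒟_{T*} into E; consequently dim 𝒟_T ≤ dim E and dim 𝒟_{T*} ≤ dim E. -/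
open scoped InnerProductSpace
open Filter Topology

universe u v

section AuxLemmas
variable {H : Type*} [NormedAddCommGroup H] [InnerProductSpace ℂ H] [CompleteSpace H]

lemma one_sub_nonneg (T : H →L[ℂ] H) (hT : ‖T‖ ≤ 1) :
    (0 : H →L[ℂ] H) ≤ 1 - ContinuousLinearMap.adjoint T * T := by
  rw [ContinuousLinearMap.nonneg_iff_isPositive]
  refine ⟨?_, fun x => ?_⟩
  · have h2 : IsSelfAdjoint (ContinuousLinearMap.adjoint T * T) := by
      rw [← ContinuousLinearMap.star_eq_adjoint]
      exact IsSelfAdjoint.star_mul_self T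
    exact ((IsSelfAdjoint.one (H →L[ℂ] H)).sub h2).isSymmetric
  · have h1 : ‖T x‖ ≤ ‖x‖ := by
      calc ‖T x‖ ≤ ‖T‖ * ‖x‖ := T.le_opNorm x
      _ ≤ 1 * ‖x‖ := by gcongr
      _ = ‖x‖ := one_mul _
    simp only [ContinuousLinearMap.reApplyInnerSelf, ContinuousLinearMap.sub_apply,
      ContinuousLinearMap.one_apply, ContinuousLinearMap.mul_apply, inner_sub_left, map_sub]
    rw [show (inner ℂ ((ContinuousLinearMap.adjoint T) (T x)) x : ℂ) = inner ℂ (T x) (T x) from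
      ContinuousLinearMap.adjoint_inner_left T x (T x)]
    rw [inner_self_eq_norm_sq (𝕜 := ℂ) x, inner_self_eq_norm_sq (𝕜 := ℂ) (T x)]
    nlinarith [norm_nonneg (T x), norm_nonneg x]

lemma norm_defectOp_sq (T : H →L[ℂ] H) (hT : ‖T‖ ≤ 1) (x : H) :
    ‖defectOp T x‖ ^ 2 = ‖x‖ ^ 2 - ‖T x‖ ^ 2 := by
  have h0 := one_sub_nonneg T hT
  have hD : defectOp T * defectOp T = 1 - ContinuousLinearMap.adjoint T * T :=
    CFC.sqrt_mul_sqrt_self _ h0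
  have hnn : (0 : H →L[ℂ] H) ≤ defectOp T :=
    CFC.sqrt_nonneg (a := 1 - ContinuousLinearMap.adjoint T * T)
  have hsa : ContinuousLinearMap.adjoint (defectOp T) = defectOp T :=
    ((ContinuousLinearMap.nonneg_iff_isPositive _).mp hnn).isSelfAdjoint.adjoint_eq
  have key : (inner ℂ (defectOp T x) (defectOp T x) : ℂ)
      = inner ℂ ((1 - ContinuousLinearMap.adjoint T * T) x) x := by
    rw [← ContinuousLinearMap.adjoint_inner_left (defectOp T) x (defectOp T x), hsa,
      ← ContinuousLinearMap.mul_apply, hD]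
  have h2 : ‖defectOp T x‖ ^ 2 = RCLike.re (K := ℂ) (inner ℂ ((1 - ContinuousLinearMap.adjoint T * T) x) x : ℂ) := by
    rw [← key, inner_self_eq_norm_sq]
  rw [h2]
  simp only [ContinuousLinearMap.sub_apply, ContinuousLinearMap.one_apply,
    ContinuousLinearMap.mul_apply, inner_sub_left, map_sub]
  rw [show (inner ℂ ((ContinuousLinearMap.adjoint T) (T x)) x : ℂ) = inner ℂ (T x) (T x) from
    ContinuousLinearMap.adjoint_inner_left T x (T x)]
  rw [inner_self_eq_norm_sq (𝕜 := ℂ) x, inner_self_eq_norm_sq (𝕜 := ℂ) (T x)]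



lemma exists_defect_isometry {H : Type u} [NormedAddCommGroup H] [InnerProductSpace ℂ H]
    [CompleteSpace H] {E : Type v} [NormedAddCommGroup E] [InnerProductSpace ℂ E]
    [CompleteSpace E] (T : H →L[ℂ] H) (e : H →L[ℂ] E)
    (he : ∀ x, ‖e x‖ = ‖defectOp T x‖) :
    ∃ f : defectSpace T →ₗᵢ[ℂ] E, ∀ x : H,
      f ⟨defectOp T x,
          Submodule.le_topologicalClosure _ (LinearMap.mem_range_self _ x)⟩ = e x := by
  classical
  set D := defectOp T with hDdef
  set S : Submodule ℂ H := LinearMap.range (D : H →ₗ[ℂ] H) with hS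
  have hle : LinearMap.ker (D : H →ₗ[ℂ] H) ≤ LinearMap.ker (e : H →ₗ[ℂ] E) := by
    intro x hx
    rw [LinearMap.mem_ker] at hx ⊢
    have h0 : ‖e x‖ = 0 := by rw [he x]; simp [show D x = 0 from hx]
    simpa using h0
  let f₁ : (H ⧸ LinearMap.ker (D : H →ₗ[ℂ] H)) →ₗ[ℂ] E :=
    Submodule.liftQ _ (e : H →ₗ[ℂ] E) hle
  let q := LinearMap.quotKerEquivRange (D : H →ₗ[ℂ] H)
  let f₀ : S →ₗ[ℂ] E := f₁ ∘ₗ (q.symm : LinearMap.range (D : H →ₗ[ℂ] H) →ₗ[ℂ] _)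
  have hf₀ : ∀ (x : H) (hx : D x ∈ S), f₀ ⟨D x, hx⟩ = e x := by
    intro x hx
    have hq : q.symm ⟨D x, hx⟩ = Submodule.Quotient.mk x := by
      rw [LinearEquiv.symm_apply_eq]
      exact Subtype.ext (LinearMap.quotKerEquivRange_apply_mk _ _).symm
    show f₁ (q.symm ⟨D x, hx⟩) = e x
    rw [hq]
    rfl
  have hnorm₀ : ∀ v : S, ‖f₀ v‖ = ‖v‖ := by
    rintro ⟨_, x, rfl⟩
    exact (congrArg norm (hf₀ x (LinearMap.mem_range_self _ x))).trans (he x)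
  let f₀L : S →L[ℂ] E := f₀.mkContinuous 1 (fun v => by rw [hnorm₀ v, one_mul])
  let Jiso : S →ₗᵢ[ℂ] defectSpace T :=
    ⟨Submodule.inclusion (Submodule.le_topologicalClosure S), fun v => rfl⟩
  let J : S →L[ℂ] defectSpace T := Jiso.toContinuousLinearMap
  have hdense : DenseRange J := by
    rintro ⟨y, hy⟩
    have hy' : y ∈ closure (S : Set H) := hy
    rw [mem_closure_iff_seq_limit] at hy'
    obtain ⟨u, hu, hulim⟩ := hy'
    refine mem_closure_of_tendsto (f := fun n => J ⟨u n, hu n⟩) (b := Filter.atTop) ?_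
      (Filter.Eventually.of_forall fun n => Set.mem_range_self _)
    rw [tendsto_subtype_rng]
    exact hulim
  have huind : IsUniformInducing J := Jiso.isometry.isUniformInducing
  let F : defectSpace T →L[ℂ] E := f₀L.extend J
  have hFJ : ∀ v : S, F (J v) = f₀L v := fun v =>
    ContinuousLinearMap.extend_eq (f := f₀L) (e := J) hdense huind v
  have hFnorm : ∀ w : defectSpace T, ‖F w‖ = ‖w‖ := by
    have heq : (fun w : defectSpace T => ‖F w‖) = fun w => ‖w‖ := by
      refine hdense.equalizer (F.continuous.norm) (continuous_norm) ?_
      funext v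
      simp only [Function.comp_apply, hFJ v]
      exact hnorm₀ v
    exact fun w => congrFun heq w
  refine ⟨⟨F.toLinearMap, hFnorm⟩, fun x => ?_⟩
  have hmem : D x ∈ S := LinearMap.mem_range_self _ x
  have hJ : (⟨D x, Submodule.le_topologicalClosure _ (LinearMap.mem_range_self _ x)⟩ :
      defectSpace T) = J ⟨D x, hmem⟩ := rfl
  show F _ = e x
  rw [hJ, hFJ]
  exact hf₀ x hmem


universe u' v'

noncomputable def sndCLM {H : Type u'} [NormedAddCommGroup H] [InnerProductSpace ℂ H]
    [CompleteSpace H] {E : Type v'} [NormedAddCommGroup E] [InnerProductSpace ℂ E]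
    [CompleteSpace E] (U : WithLp 2 (H × E) →L[ℂ] WithLp 2 (H × E)) : H →L[ℂ] E :=
  (ContinuousLinearMap.snd ℂ H E) ∘L
    (WithLp.prodContinuousLinearEquiv 2 ℂ H E).toContinuousLinearMap ∘L U ∘L
    (WithLp.prodContinuousLinearEquiv 2 ℂ H E).symm.toContinuousLinearMap ∘L
    (ContinuousLinearMap.inl ℂ H E)

lemma sndCLM_apply {H : Type u'} [NormedAddCommGroup H] [InnerProductSpace ℂ H]
    [CompleteSpace H] {E : Type v'} [NormedAddCommGroup E] [InnerProductSpace ℂ E]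
    [CompleteSpace E] (U : WithLp 2 (H × E) →L[ℂ] WithLp 2 (H × E)) (x : H) :
    sndCLM U x = (WithLp.equiv 2 (H × E) (U ((WithLp.equiv 2 (H × E)).symm (x, 0)))).2 :=
  rfl

end AuxLemmas

section MainAux
variable {H : Type u} [NormedAddCommGroup H] [InnerProductSpace ℂ H] [CompleteSpace H]
  {E : Type v} [NormedAddCommGroup E] [InnerProductSpace ℂ E] [CompleteSpace E]

lemma unitary_norm_map {U : WithLp 2 (H × E) →L[ℂ] WithLp 2 (H × E)}
    (hU : U ∈ unitary (WithLp 2 (H × E) →L[ℂ] WithLp 2 (H × E)))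
    (v : WithLp 2 (H × E)) : ‖U v‖ = ‖v‖ := by
  have h1 : ContinuousLinearMap.adjoint U * U = 1 := by
    rw [← ContinuousLinearMap.star_eq_adjoint]
    exact (Unitary.mem_iff.mp hU).1
  have h2 : (inner ℂ (U v) (U v) : ℂ) = inner ℂ v v := by
    rw [← ContinuousLinearMap.adjoint_inner_right]
    rw [show (ContinuousLinearMap.adjoint U) (U v)
      = (ContinuousLinearMap.adjoint U * U) v from rfl, h1]
    rfl
  have h3 : ‖U v‖ ^ 2 = ‖v‖ ^ 2 := by
    rw [← inner_self_eq_norm_sq (𝕜 := ℂ) (U v), ← inner_self_eq_norm_sq (𝕜 := ℂ) v, h2]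
  rw [← Real.sqrt_sq (norm_nonneg (U v)), ← Real.sqrt_sq (norm_nonneg v), h3]

lemma snd_norm_eq {T : H →L[ℂ] H} (hT : ‖T‖ ≤ 1)
    {U : WithLp 2 (H × E) →L[ℂ] WithLp 2 (H × E)} (hU : IsUnitaryDilation T U) (x : H) :
    ‖(WithLp.equiv 2 (H × E) (U ((WithLp.equiv 2 (H × E)).symm (x, 0)))).2‖
      = ‖defectOp T x‖ := by
  set v : WithLp 2 (H × E) := (WithLp.equiv 2 (H × E)).symm (x, 0) with hv
  have hvn : ‖v‖ ^ 2 = ‖x‖ ^ 2 := by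
    rw [WithLp.prod_norm_sq_eq_of_L2]
    simp [hv]
  have hU2 : ‖U v‖ ^ 2 = ‖(U v).fst‖ ^ 2 + ‖(U v).snd‖ ^ 2 := WithLp.prod_norm_sq_eq_of_L2 _
  have hfst : (U v).fst = T x := by
    rw [hU.2 x]; rfl
  have hn := unitary_norm_map hU.1 v
  have h2 : ‖(U v).snd‖ ^ 2 = ‖x‖ ^ 2 - ‖T x‖ ^ 2 := by
    have := congrArg (· ^ 2) hn
    rw [hU2, hvn, hfst] at this
    linarith
  have hD := norm_defectOp_sq T hT x
  have : ‖(U v).snd‖ ^ 2 = ‖defectOp T x‖ ^ 2 := by rw [h2, hD]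
  have hfinal : ‖(U v).snd‖ = ‖defectOp T x‖ := by
    rw [← Real.sqrt_sq (norm_nonneg ((U v).snd)), ← Real.sqrt_sq (norm_nonneg (defectOp T x)), this]
  exact hfinal

lemma star_dilation {T : H →L[ℂ] H}
    {U : WithLp 2 (H × E) →L[ℂ] WithLp 2 (H × E)} (hU : IsUnitaryDilation T U) :
    IsUnitaryDilation (ContinuousLinearMap.adjoint T) (star U) := by
  refine ⟨Unitary.star_mem hU.1, fun x => ?_⟩
  set v : WithLp 2 (H × E) := (WithLp.equiv 2 (H × E)).symm (x, 0) with hv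
  refine ext_inner_right ℂ fun y => ?_
  set w : WithLp 2 (H × E) := (WithLp.equiv 2 (H × E)).symm (y, 0) with hw
  have lhs : (inner ℂ (ContinuousLinearMap.adjoint T x) y : ℂ) = inner ℂ x (T y) :=
    ContinuousLinearMap.adjoint_inner_left T y x
  have h1 : (inner ℂ ((star U v : WithLp 2 (H × E)).fst) y : ℂ) = inner ℂ (star U v) w := by
    rw [WithLp.prod_inner_apply]
    simp [hw]
  have h2 : (inner ℂ (star U v) w : ℂ) = inner ℂ v (U w) := by
    rw [ContinuousLinearMap.star_eq_adjoint]
    exact ContinuousLinearMap.adjoint_inner_left U w v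
  have h3 : (inner ℂ v (U w) : ℂ) = inner ℂ x ((U w).fst) := by
    rw [WithLp.prod_inner_apply]
    simp [hv]
  have h4 : (U w).fst = T y := by rw [hU.2 y]; rfl
  show (inner ℂ (ContinuousLinearMap.adjoint T x) y : ℂ)
    = inner ℂ ((star U v : WithLp 2 (H × E)).fst) y
  rw [lhs, h1, h2, h3, h4]

end MainAux



/-- If `U` is a unitary dilation of a contraction `T` on `H ⊕ E`, then
`D_T x ↦ P_E (U (x ⊕ 0))` extends to a linear isometry `𝒟_T → E`, and similarly
`D_{T*} x ↦ P_E (U* (x ⊕ 0))` extends to a linear isometry `𝒟_{T*} → E`; consequently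
`dim 𝒟_T ≤ dim E` and `dim 𝒟_{T*} ≤ dim E`. -/
theorem defect_isometry_of_unitary_dilation
    {H : Type u} [NormedAddCommGroup H] [InnerProductSpace ℂ H] [CompleteSpace H]
    {E : Type v} [NormedAddCommGroup E] [InnerProductSpace ℂ E] [CompleteSpace E]
    (T : H →L[ℂ] H) (hT : ‖T‖ ≤ 1)
    (U : WithLp 2 (H × E) →L[ℂ] WithLp 2 (H × E)) (hU : IsUnitaryDilation T U) :
    (∃ f : defectSpace T →ₗᵢ[ℂ] E, ∀ x : H,
      f ⟨defectOp T x,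
          Submodule.le_topologicalClosure _ (LinearMap.mem_range_self _ x)⟩ =
        (WithLp.equiv 2 (H × E) (U ((WithLp.equiv 2 (H × E)).symm (x, 0)))).2) ∧
    (∃ g : defectSpace (ContinuousLinearMap.adjoint T) →ₗᵢ[ℂ] E, ∀ x : H,
      g ⟨defectOp (ContinuousLinearMap.adjoint T) x,
          Submodule.le_topologicalClosure _ (LinearMap.mem_range_self _ x)⟩ =
        (WithLp.equiv 2 (H × E) ((star U) ((WithLp.equiv 2 (H × E)).symm (x, 0)))).2) ∧
    Cardinal.lift.{v} (Module.rank ℂ (defectSpace T)) ≤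
      Cardinal.lift.{u} (Module.rank ℂ E) ∧
    Cardinal.lift.{v} (Module.rank ℂ (defectSpace (ContinuousLinearMap.adjoint T))) ≤
      Cardinal.lift.{u} (Module.rank ℂ E) := by
  classical
  have hT' : ‖ContinuousLinearMap.adjoint T‖ ≤ 1 := by
    rw [← ContinuousLinearMap.star_eq_adjoint, norm_star]; exact hT
  have hU' := star_dilation hU
  obtain ⟨f, hf⟩ := exists_defect_isometry T (sndCLM U) (fun x => by
    rw [sndCLM_apply]; exact snd_norm_eq hT hU x)
  obtain ⟨g, hg⟩ := exists_defect_isometry (ContinuousLinearMap.adjoint T) (sndCLM (star U))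
    (fun x => by rw [sndCLM_apply]; exact snd_norm_eq hT' hU' x)
  refine ⟨⟨f, fun x => by rw [hf x, sndCLM_apply]⟩, ⟨g, fun x => by rw [hg x, sndCLM_apply]⟩,
    LinearMap.lift_rank_le_of_injective f.toLinearMap f.injective,
    LinearMap.lift_rank_le_of_injective g.toLinearMap g.injective⟩
end
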